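/- arXiv:0706.1523 — 3 statements merged into one kernel-verified Lean document; each statement's English description precedes it below -/
import Mathlib

section
/- For all integers a, b ≥ 1, the quotient of the polynomial ring ℂ[x,y] by the ideal generated by x^a + y^b and x·y is a finite-dimensional ℂ-vector space of dimension exactly a + b. -/
open MvPolynomial Polynomial

namespace QuotDimAux

/-- The basis monomials: `X0^k` for `k ≤ a`, and `X1^(k-a)` for `a < k < a+b`. -/
noncomputable def mfam (a b : ℕ) (k : Fin (a + b)) : MvPolynomial (Fin 2) ℂ :=
  if (k : ℕ) ≤ a then MvPolynomial.X 0 ^ (k : ℕ) else MvPolynomial.X 1 ^ ((k : ℕ) - a)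

variable (a b : ℕ)

noncomputable abbrev Idl : Ideal (MvPolynomial (Fin 2) ℂ) :=
  Ideal.span {MvPolynomial.X 0 ^ a + MvPolynomial.X 1 ^ b,
    MvPolynomial.X 0 * MvPolynomial.X 1}

/-- Key coefficient computation: if a linear combination of the basis monomials lies in
the ideal, all coefficients vanish. -/
lemma indep_aux (ha : 1 ≤ a) (hb : 1 ≤ b) (c : Fin (a + b) → ℂ)
    (hmem : (∑ k, MvPolynomial.C (c k) * mfam a b k) ∈ Idl a b) :
    ∀ k, c k = 0 := by
  obtain ⟨f, g, hfg⟩ := Ideal.mem_span_pair.mp hmem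
  set P0 : MvPolynomial (Fin 2) ℂ →ₐ[ℂ] Polynomial ℂ :=
    MvPolynomial.aeval ![Polynomial.X, 0] with hP0def
  set P1 : MvPolynomial (Fin 2) ℂ →ₐ[ℂ] Polynomial ℂ :=
    MvPolynomial.aeval ![0, Polynomial.X] with hP1def
  have hP0X0 : P0 (MvPolynomial.X 0) = Polynomial.X := by simp [hP0def]
  have hP0X1 : P0 (MvPolynomial.X 1) = 0 := by simp [hP0def]
  have hP1X0 : P1 (MvPolynomial.X 0) = 0 := by simp [hP1def]
  have hP1X1 : P1 (MvPolynomial.X 1) = Polynomial.X := by simp [hP1def]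
  have hP0m : ∀ k : Fin (a + b),
      P0 (mfam a b k) = if (k : ℕ) ≤ a then Polynomial.X ^ (k : ℕ) else 0 := by
    intro k
    unfold mfam
    split_ifs with h
    · rw [map_pow, hP0X0]
    · rw [map_pow, hP0X1, zero_pow (by omega : (k : ℕ) - a ≠ 0)]
  have hP1m : ∀ k : Fin (a + b),
      P1 (mfam a b k) =
        if (k : ℕ) = 0 then 1
        else if (k : ℕ) ≤ a then 0 else Polynomial.X ^ ((k : ℕ) - a) := by
    intro k
    unfold mfam
    by_cases h0 : (k : ℕ) = 0
    · simp [h0]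
    · rw [if_neg h0]
      by_cases h1 : (k : ℕ) ≤ a
      · rw [if_pos h1, if_pos h1, map_pow, hP1X0, zero_pow h0]
      · rw [if_neg h1, if_neg h1, map_pow, hP1X1]
  -- Equation from substituting y = 0
  have E0 : P0 f * Polynomial.X ^ a =
      ∑ k, Polynomial.C (c k) * (if (k : ℕ) ≤ a then Polynomial.X ^ (k : ℕ) else 0) := by
    have h := congrArg P0 hfg
    rw [map_add, map_mul, map_mul, map_add, map_pow, map_pow, map_mul, hP0X0, hP0X1,
      zero_pow (by omega : b ≠ 0), add_zero, mul_zero, mul_zero, add_zero, map_sum] at h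
    rw [h]
    refine Finset.sum_congr rfl fun k _ => ?_
    rw [map_mul, hP0m k]
    congr 1
    rw [hP0def]
    exact MvPolynomial.aeval_C _ _
  -- Equation from substituting x = 0
  have E1 : P1 f * Polynomial.X ^ b =
      ∑ k, Polynomial.C (c k) *
        (if (k : ℕ) = 0 then 1
         else if (k : ℕ) ≤ a then 0 else Polynomial.X ^ ((k : ℕ) - a)) := by
    have h := congrArg P1 hfg
    rw [map_add, map_mul, map_mul, map_add, map_pow, map_pow, map_mul, hP1X0, hP1X1,
      zero_pow (by omega : a ≠ 0), zero_add, zero_mul, mul_zero, add_zero, map_sum] at h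
    rw [h]
    refine Finset.sum_congr rfl fun k _ => ?_
    rw [map_mul, hP1m k]
    congr 1
    rw [hP1def]
    exact MvPolynomial.aeval_C _ _
  -- coefficients of the RHS of E0
  have key0 : ∀ n : ℕ, ∀ _hn : n ≤ a,
      (∑ k : Fin (a + b), Polynomial.C (c k) *
          (if (k : ℕ) ≤ a then Polynomial.X ^ (k : ℕ) else 0)).coeff n
        = c ⟨n, by omega⟩ := by
    intro n hn
    rw [Polynomial.finset_sum_coeff]
    rw [Finset.sum_eq_single (⟨n, by omega⟩ : Fin (a + b))]
    · simp [Fin.val_mk, hn]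
    · intro k _ hk
      split_ifs with h
      · rw [Polynomial.coeff_C_mul, Polynomial.coeff_X_pow, if_neg, mul_zero]
        intro hnk
        exact hk (Fin.ext (by simp only [Fin.val_mk]; omega))
      · simp
    · intro h; exact absurd (Finset.mem_univ _) h
  -- coefficients of the RHS of E1
  have key1 : ∀ n : ℕ, ∀ _h1 : 1 ≤ n, ∀ _h2 : n < b,
      (∑ k : Fin (a + b), Polynomial.C (c k) *
          (if (k : ℕ) = 0 then 1
           else if (k : ℕ) ≤ a then 0 else Polynomial.X ^ ((k : ℕ) - a))).coeff n
        = c ⟨a + n, by omega⟩ := by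
    intro n h1 h2
    rw [Polynomial.finset_sum_coeff]
    rw [Finset.sum_eq_single (⟨a + n, by omega⟩ : Fin (a + b))]
    · rw [if_neg (by simp only [Fin.val_mk]; omega), if_neg (by simp only [Fin.val_mk]; omega)]
      rw [Polynomial.coeff_C_mul, Polynomial.coeff_X_pow,
        if_pos (by simp only [Fin.val_mk]; omega), mul_one]
    · intro k _ hk
      have hkl : (k : ℕ) < a + b := k.isLt
      split_ifs with h3 h4
      · rw [Polynomial.coeff_C_mul, Polynomial.coeff_one, if_neg (by omega), mul_zero]
      · simp
      · rw [Polynomial.coeff_C_mul, Polynomial.coeff_X_pow, if_neg, mul_zero]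
        intro hnk
        exact hk (Fin.ext (by simp only [Fin.val_mk]; omega))
    · intro h; exact absurd (Finset.mem_univ _) h
  have key1z :
      (∑ k : Fin (a + b), Polynomial.C (c k) *
          (if (k : ℕ) = 0 then 1
           else if (k : ℕ) ≤ a then 0 else Polynomial.X ^ ((k : ℕ) - a))).coeff 0
        = c ⟨0, by omega⟩ := by
    rw [Polynomial.finset_sum_coeff]
    rw [Finset.sum_eq_single (⟨0, by omega⟩ : Fin (a + b))]
    · simp
    · intro k _ hk
      split_ifs with h3 h4
      · exact absurd (Fin.ext (by simp only [Fin.val_mk]; omega)) hk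
      · simp
      · rw [Polynomial.coeff_C_mul, Polynomial.coeff_X_pow, if_neg (by omega), mul_zero]
    · intro h; exact absurd (Finset.mem_univ _) h
  have key1b :
      (∑ k : Fin (a + b), Polynomial.C (c k) *
          (if (k : ℕ) = 0 then 1
           else if (k : ℕ) ≤ a then 0 else Polynomial.X ^ ((k : ℕ) - a))).coeff b
        = 0 := by
    rw [Polynomial.finset_sum_coeff]
    refine Finset.sum_eq_zero fun k _ => ?_
    have hkl : (k : ℕ) < a + b := k.isLt
    split_ifs with h3 h4
    · rw [Polynomial.coeff_C_mul, Polynomial.coeff_one, if_neg (by omega), mul_zero]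
    · simp
    · rw [Polynomial.coeff_C_mul, Polynomial.coeff_X_pow, if_neg (by omega), mul_zero]
  -- low coefficients from E0
  have hlow : ∀ i : ℕ, ∀ _hi : i < a, c ⟨i, by omega⟩ = 0 := by
    intro i hi
    have h := congrArg (fun p => Polynomial.coeff p i) E0
    try simp only at h
    rw [Polynomial.coeff_mul_X_pow', if_neg (by omega), key0 i (by omega)] at h
    exact h.symm
  -- coefficient a from E0
  have hFa : (P0 f).coeff 0 = c ⟨a, by omega⟩ := by
    have h := congrArg (fun p => Polynomial.coeff p a) E0
    try simp only at h
    rw [Polynomial.coeff_mul_X_pow', if_pos le_rfl, Nat.sub_self, key0 a le_rfl] at h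
    exact h
  -- from E1
  have hc0 : c ⟨0, by omega⟩ = 0 := by
    have h := congrArg (fun p => Polynomial.coeff p 0) E1
    try simp only at h
    rw [Polynomial.coeff_mul_X_pow', if_neg (by omega), key1z] at h
    exact h.symm
  have hmid : ∀ j : ℕ, ∀ _h1 : 1 ≤ j, ∀ _h2 : j < b, c ⟨a + j, by omega⟩ = 0 := by
    intro j h1 h2
    have h := congrArg (fun p => Polynomial.coeff p j) E1
    try simp only at h
    rw [Polynomial.coeff_mul_X_pow', if_neg (by omega), key1 j h1 h2] at h
    exact h.symm
  have hG0 : (P1 f).coeff 0 = 0 := by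
    have h := congrArg (fun p => Polynomial.coeff p b) E1
    try simp only at h
    rw [Polynomial.coeff_mul_X_pow', if_pos le_rfl, Nat.sub_self, key1b] at h
    exact h
  -- bridge: constant coefficients agree
  have hbridge : ∀ q : MvPolynomial (Fin 2) ℂ, (P0 q).coeff 0 = (P1 q).coeff 0 := by
    intro q
    rw [Polynomial.coeff_zero_eq_eval_zero, Polynomial.coeff_zero_eq_eval_zero]
    induction q using MvPolynomial.induction_on with
    | C r =>
        rw [hP0def, hP1def, MvPolynomial.aeval_C, MvPolynomial.aeval_C]
    | add p q hp hq =>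
        rw [map_add, map_add, Polynomial.eval_add, Polynomial.eval_add, hp, hq]
    | mul_X p i hp =>
        rw [map_mul, map_mul, Polynomial.eval_mul, Polynomial.eval_mul]
        fin_cases i
        · rw [show ((⟨0, by norm_num⟩ : Fin 2)) = 0 from rfl, hP0X0, hP1X0]
          simp
        · rw [show ((⟨1, by norm_num⟩ : Fin 2)) = 1 from rfl, hP0X1, hP1X1]
          simp
  have hca : c ⟨a, by omega⟩ = 0 := by rw [← hFa, hbridge f, hG0]
  intro k
  obtain ⟨n, hn⟩ := k
  rcases lt_trichotomy n a with h | h | h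
  · exact hlow n h
  · subst h; exact hca
  · rw [show (⟨n, hn⟩ : Fin (a + b)) = ⟨a + (n - a), by omega⟩ from Fin.ext (by
      simp only [Fin.val_mk]; omega)]
    exact hmid (n - a) (by omega) (by omega)

lemma indep (ha : 1 ≤ a) (hb : 1 ≤ b) :
    LinearIndependent ℂ
      (fun k => Ideal.Quotient.mkₐ ℂ (Idl a b) (mfam a b k)) := by
  rw [Fintype.linearIndependent_iff]
  intro c hc
  apply indep_aux a b ha hb c
  have h0 : Ideal.Quotient.mkₐ ℂ (Idl a b) (∑ k, MvPolynomial.C (c k) * mfam a b k) = 0 := by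
    rw [map_sum, ← hc]
    refine Finset.sum_congr rfl fun k _ => ?_
    rw [← MvPolynomial.smul_eq_C_mul, map_smul]
  rw [Ideal.Quotient.mkₐ_eq_mk] at h0
  exact Ideal.Quotient.eq_zero_iff_mem.mp h0

lemma span_top (ha : 1 ≤ a) (hb : 1 ≤ b) :
    Submodule.span ℂ
      (Set.range fun k => Ideal.Quotient.mkₐ ℂ (Idl a b) (mfam a b k)) = ⊤ := by
  set S := Submodule.span ℂ
    (Set.range fun k => Ideal.Quotient.mkₐ ℂ (Idl a b) (mfam a b k)) with hS
  have hgen1 : (MvPolynomial.X 0 ^ a + MvPolynomial.X 1 ^ b : MvPolynomial (Fin 2) ℂ) ∈ Idl a b :=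
    Ideal.subset_span (Set.mem_insert _ _)
  have hmul0 : ∀ i j : ℕ, 1 ≤ i → 1 ≤ j →
      Ideal.Quotient.mkₐ ℂ (Idl a b)
        (MvPolynomial.X 0 ^ i * MvPolynomial.X 1 ^ j) = 0 := by
    intro i j hi hj
    rw [Ideal.Quotient.mkₐ_eq_mk, Ideal.Quotient.eq_zero_iff_mem]
    obtain ⟨i', rfl⟩ : ∃ i', i = i' + 1 := ⟨i - 1, by omega⟩
    obtain ⟨j', rfl⟩ : ∃ j', j = j' + 1 := ⟨j - 1, by omega⟩
    refine Ideal.mem_span_pair.mpr ⟨0, MvPolynomial.X 0 ^ i' * MvPolynomial.X 1 ^ j', ?_⟩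
    ring
  have hXa1 : Ideal.Quotient.mkₐ ℂ (Idl a b) (MvPolynomial.X 0 ^ (a + 1)) = 0 := by
    rw [Ideal.Quotient.mkₐ_eq_mk, Ideal.Quotient.eq_zero_iff_mem]
    refine Ideal.mem_span_pair.mpr ⟨MvPolynomial.X 0, -(MvPolynomial.X 1 ^ (b - 1)), ?_⟩
    set e := b - 1 with he
    have hb'' : b = e + 1 := by omega
    rw [hb'']
    ring
  have hYb : Ideal.Quotient.mkₐ ℂ (Idl a b) (MvPolynomial.X 1 ^ b)
      = - Ideal.Quotient.mkₐ ℂ (Idl a b) (MvPolynomial.X 0 ^ a) := by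
    have h0 : Ideal.Quotient.mkₐ ℂ (Idl a b)
        (MvPolynomial.X 0 ^ a + MvPolynomial.X 1 ^ b) = 0 := by
      rw [Ideal.Quotient.mkₐ_eq_mk, Ideal.Quotient.eq_zero_iff_mem]
      exact hgen1
    rw [map_add] at h0
    linear_combination h0
  have hmemS : ∀ k : Fin (a + b), Ideal.Quotient.mkₐ ℂ (Idl a b) (mfam a b k) ∈ S :=
    fun k => Submodule.subset_span ⟨k, rfl⟩
  have hm0 : mfam a b ⟨a, by omega⟩ = MvPolynomial.X 0 ^ a := by
    unfold mfam
    rw [if_pos (by simp only [Fin.val_mk]; exact le_rfl)]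
  have hXaS : Ideal.Quotient.mkₐ ℂ (Idl a b) (MvPolynomial.X 0 ^ a) ∈ S := by
    rw [← hm0]; exact hmemS _
  -- closure of S under multiplication by X i
  have hstep : ∀ (i : Fin 2) (k : Fin (a + b)),
      Ideal.Quotient.mkₐ ℂ (Idl a b) (mfam a b k)
        * Ideal.Quotient.mkₐ ℂ (Idl a b) (MvPolynomial.X i) ∈ S := by
    intro i k
    have hkl : (k : ℕ) < a + b := k.isLt
    rw [← map_mul]
    fin_cases i
    · -- multiply by X 0
      show Ideal.Quotient.mkₐ ℂ (Idl a b) (mfam a b k * MvPolynomial.X 0) ∈ S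
      unfold mfam
      by_cases hk : (k : ℕ) ≤ a
      · rw [if_pos hk, ← pow_succ]
        by_cases hk' : (k : ℕ) < a
        · have heq : (MvPolynomial.X 0 ^ ((k : ℕ) + 1) : MvPolynomial (Fin 2) ℂ)
              = mfam a b ⟨(k : ℕ) + 1, by omega⟩ := by
            unfold mfam
            rw [if_pos (by simp only [Fin.val_mk]; omega)]
          rw [heq]
          exact hmemS _
        · have hka : (k : ℕ) = a := by omega
          rw [hka, hXa1]
          exact S.zero_mem
      · rw [if_neg hk]
        have heq : (MvPolynomial.X 1 ^ ((k : ℕ) - a) * MvPolynomial.X 0 : MvPolynomial (Fin 2) ℂ)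
            = MvPolynomial.X 0 ^ 1 * MvPolynomial.X 1 ^ ((k : ℕ) - a) := by ring
        rw [heq, hmul0 1 ((k : ℕ) - a) le_rfl (by omega)]
        exact S.zero_mem
    · -- multiply by X 1
      show Ideal.Quotient.mkₐ ℂ (Idl a b) (mfam a b k * MvPolynomial.X 1) ∈ S
      unfold mfam
      by_cases hk0 : (k : ℕ) = 0
      · rw [if_pos (by omega : (k : ℕ) ≤ a), hk0, pow_zero, one_mul]
        by_cases hb2 : 2 ≤ b
        · have heq : (MvPolynomial.X 1 : MvPolynomial (Fin 2) ℂ)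
              = mfam a b ⟨a + 1, by omega⟩ := by
            unfold mfam
            rw [if_neg (by simp only [Fin.val_mk]; omega)]
            rw [show a + 1 - a = 1 by omega, pow_one]
          rw [heq]
          exact hmemS _
        · have hb1 : b = 1 := by omega
          have heq : (MvPolynomial.X 1 : MvPolynomial (Fin 2) ℂ) = MvPolynomial.X 1 ^ b := by
            rw [hb1, pow_one]
          rw [heq, hYb]
          exact S.neg_mem hXaS
      · by_cases hk : (k : ℕ) ≤ a
        · rw [if_pos hk]
          have heq : (MvPolynomial.X 0 ^ (k : ℕ) * MvPolynomial.X 1 : MvPolynomial (Fin 2) ℂ)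
              = MvPolynomial.X 0 ^ (k : ℕ) * MvPolynomial.X 1 ^ 1 := by ring
          rw [heq, hmul0 (k : ℕ) 1 (by omega) le_rfl]
          exact S.zero_mem
        · rw [if_neg hk, ← pow_succ]
          by_cases hk' : (k : ℕ) - a + 1 ≤ b - 1
          · have heq : (MvPolynomial.X 1 ^ ((k : ℕ) - a + 1) : MvPolynomial (Fin 2) ℂ)
                = mfam a b ⟨(k : ℕ) + 1, by omega⟩ := by
              unfold mfam
              rw [if_neg (by simp only [Fin.val_mk]; omega)]
              congr 1
              simp only [Fin.val_mk]
              omega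
            rw [heq]
            exact hmemS _
          · rw [show (k : ℕ) - a + 1 = b by omega, hYb]
            exact S.neg_mem hXaS
  rw [eq_top_iff]
  rintro q -
  obtain ⟨p, rfl⟩ := Ideal.Quotient.mkₐ_surjective ℂ (Idl a b) q
  induction p using MvPolynomial.induction_on with
  | C r =>
      have hm1 : mfam a b ⟨0, by omega⟩ = 1 := by
        unfold mfam
        rw [if_pos (by simp only [Fin.val_mk]; omega)]
        exact pow_zero _
      have h1 : Ideal.Quotient.mkₐ ℂ (Idl a b) (MvPolynomial.C r)
          = r • Ideal.Quotient.mkₐ ℂ (Idl a b) (mfam a b ⟨0, by omega⟩) := by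
        rw [hm1, ← map_smul]
        congr 1
        rw [MvPolynomial.smul_eq_C_mul, mul_one]
      rw [h1]
      exact S.smul_mem _ (hmemS _)
  | add p q hp hq =>
      rw [map_add]
      exact S.add_mem hp hq
  | mul_X p i hp =>
      rw [map_mul]
      refine Submodule.span_induction
        (p := fun x _ => x * Ideal.Quotient.mkₐ ℂ (Idl a b) (MvPolynomial.X i) ∈ S)
        ?_ ?_ ?_ ?_ hp
      · rintro x ⟨k, rfl⟩
        exact hstep i k
      · show (0 : MvPolynomial (Fin 2) ℂ ⧸ Idl a b)
            * Ideal.Quotient.mkₐ ℂ (Idl a b) (MvPolynomial.X i) ∈ S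
        rw [zero_mul]; exact S.zero_mem
      · intro x y _ _ hx hy
        show (x + y) * Ideal.Quotient.mkₐ ℂ (Idl a b) (MvPolynomial.X i) ∈ S
        rw [add_mul]
        exact S.add_mem hx hy
      · intro r x _ hx
        show (r • x) * Ideal.Quotient.mkₐ ℂ (Idl a b) (MvPolynomial.X i) ∈ S
        rw [smul_mul_assoc]
        exact S.smul_mem r hx

end QuotDimAux

set_option maxHeartbeats 1000000 in
/-- For all integers `a, b ≥ 1`, the quotient of the polynomial ring
`ℂ[x,y]` by the ideal generated by `x^a + y^b` and `x*y` is a finite-dimensional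
`ℂ`-vector space of dimension exactly `a + b`. -/
theorem quotient_dim_eq_add (a b : ℕ) (ha : 1 ≤ a) (hb : 1 ≤ b) :
    FiniteDimensional ℂ
      (MvPolynomial (Fin 2) ℂ ⧸
        (Ideal.span {MvPolynomial.X 0 ^ a + MvPolynomial.X 1 ^ b,
          MvPolynomial.X 0 * MvPolynomial.X 1} : Ideal (MvPolynomial (Fin 2) ℂ))) ∧
    Module.finrank ℂ
      (MvPolynomial (Fin 2) ℂ ⧸
        (Ideal.span {MvPolynomial.X 0 ^ a + MvPolynomial.X 1 ^ b,
          MvPolynomial.X 0 * MvPolynomial.X 1} : Ideal (MvPolynomial (Fin 2) ℂ))) = a + b := by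
  have hind := QuotDimAux.indep a b ha hb
  have hspan := QuotDimAux.span_top a b ha hb
  let B := Module.Basis.mk hind (le_of_eq hspan.symm)
  have fd : FiniteDimensional ℂ
      (MvPolynomial (Fin 2) ℂ ⧸ (QuotDimAux.Idl a b)) :=
    Module.Finite.of_basis B
  refine ⟨fd, ?_⟩
  rw [Module.finrank_eq_card_basis B, Fintype.card_fin]
end

section
/- Fix an integer n ≥ 1. There exist polynomials Λ₁,…,Λ_n in n variables over ℂ such that for every a = (a₂,…,a_{n+1}) ∈ ℂⁿ, the monic degree-n polynomial ∏_{c}(T − f_a(c)), where the product ranges over the multiset of roots c of f_a′/(n+1) (with multiplicity), equals Tⁿ + Λ₁(a)T^{n−1} + ⋯ + Λ_n(a). In other words, the Lyashko–Looijenga map, sending a to the unordered multiset of critical values of f_a, extends to a polynomial map ℂⁿ → ℂⁿ. -/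
open Polynomial

/-- The standard versal unfolding of the singularity `A_n`:
`f_a(x) = x^(n+1) + a₂ x^(n-1) + a₃ x^(n-2) + ⋯ + a_n x + a_{n+1}`,
where `a i` (for `i : Fin n`) denotes `a_{i+2}`, which multiplies `x^(n-1-i)`. -/
noncomputable def fA (n : ℕ) (a : Fin n → ℂ) : Polynomial ℂ :=
  X ^ (n + 1) + ∑ i : Fin n, C (a i) * X ^ (n - 1 - (i : ℕ))

namespace LL

lemma degree_tail_lt {n : ℕ} (a : Fin n → ℂ) :
    (∑ i : Fin n, C (a i) * X ^ (n - 1 - (i:ℕ)) : ℂ[X]).degree < ((n+1 : ℕ) : ℕ) := by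
  apply lt_of_le_of_lt (degree_sum_le _ _)
  rw [Finset.sup_lt_iff (by exact_mod_cast WithBot.bot_lt_coe (n+1))]
  intro i _
  refine lt_of_le_of_lt (degree_C_mul_X_pow_le _ _) ?_
  exact_mod_cast Nat.lt_succ_of_le (by omega)

lemma monic_fA (n : ℕ) (a : Fin n → ℂ) : (fA n a).Monic :=
  monic_X_pow_add (degree_tail_lt a)  -- guess signature; fix later

lemma natDegree_fA (n : ℕ) (a : Fin n → ℂ) : (fA n a).natDegree = n + 1 := by
  have : (fA n a).degree = ((n+1 : ℕ) : WithBot ℕ) := by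
    rw [fA, degree_add_eq_left_of_degree_lt (by rw [degree_X_pow]; exact_mod_cast degree_tail_lt a), degree_X_pow]
  exact natDegree_eq_of_degree_eq_some this

lemma coeff_n_deriv (n : ℕ) (a : Fin n → ℂ) :
    (derivative (fA n a)).coeff n = (n + 1 : ℂ) := by
  rw [coeff_derivative]
  have h1 : (fA n a).coeff (n + 1) = 1 := by
    have := (monic_fA n a).coeff_natDegree
    rwa [natDegree_fA] at this
  rw [h1, one_mul]

lemma natDegree_deriv (n : ℕ) (a : Fin n → ℂ) :
    (derivative (fA n a)).natDegree = n := by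
  refine le_antisymm ?_ (le_natDegree_of_ne_zero ?_)
  · have := natDegree_derivative_le (fA n a)
    rwa [natDegree_fA, Nat.add_sub_cancel] at this
  · rw [coeff_n_deriv]
    exact Nat.cast_add_one_ne_zero n

lemma card_roots_deriv (n : ℕ) (a : Fin n → ℂ) :
    Multiset.card (derivative (fA n a)).roots = n := by
  have := splits_iff_card_roots.mp (IsAlgClosed.splits (derivative (fA n a)))
  rw [this, natDegree_deriv n a]

end LL

namespace LL
open Polynomial Finset

lemma monic_expand {p : ℂ[X]} {n : ℕ} (hm : p.Monic) (hd : p.natDegree = n) :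
    p = X ^ n + ∑ i : Fin n, C (p.coeff (n - 1 - (i:ℕ))) * X ^ (n - 1 - (i:ℕ)) := by
  have h2 : ∑ i : Fin n, C (p.coeff (n - 1 - (i:ℕ))) * X ^ (n - 1 - (i:ℕ))
      = ∑ i : Fin n, C (p.coeff (i:ℕ)) * X ^ (i:ℕ) := by
    apply Fintype.sum_equiv Fin.revPerm
    intro i
    have : ((Fin.revPerm i : Fin n) : ℕ) = n - 1 - (i : ℕ) := by
      simp [Fin.revPerm, Fin.val_rev]; omega
    rw [this]
  rw [h2]
  have h3 := p.as_sum_range' (n+1) (by rw [hd]; exact Nat.lt_succ_self n)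
  rw [Finset.sum_range_succ] at h3
  have hc : p.coeff n = 1 := hd ▸ hm.coeff_natDegree
  rw [hc] at h3
  conv_lhs => rw [h3]
  rw [add_comm]
  congr 1
  · rw [X_pow_eq_monomial]
  · rw [← Fin.sum_univ_eq_sum_range (fun i => (monomial i) (p.coeff i)) n]
    exact Finset.sum_congr rfl fun i _ => C_mul_X_pow_eq_monomial.symm

lemma list_enum {n : ℕ} (l : List ℂ) (h : l.length = n) :
    ∃ rt : Fin n → ℂ, Multiset.map rt Finset.univ.val = (l : Multiset ℂ) := by
  subst h
  exact ⟨l.get, by rw [Fin.univ_val_map]; exact congrArg _ (List.ofFn_get l)⟩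

lemma exists_enum (s : Multiset ℂ) {n : ℕ} (h : Multiset.card s = n) :
    ∃ rt : Fin n → ℂ, Multiset.map rt Finset.univ.val = s := by
  obtain ⟨l, rfl⟩ := s.exists_rep
  exact list_enum l (by simpa using h)

noncomputable def Fgen (n : ℕ) : Polynomial (MvPolynomial (Fin n) ℂ) :=
  X ^ (n + 1) + ∑ i : Fin n, C (MvPolynomial.X i) * X ^ (n - 1 - (i : ℕ))

lemma map_Fgen (n : ℕ) (a : Fin n → ℂ) :
    (Fgen n).map (MvPolynomial.eval a) = fA n a := by
  simp only [Fgen, fA, Polynomial.map_add, Polynomial.map_pow, Polynomial.map_X,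
    Polynomial.map_sum, Polynomial.map_mul, Polynomial.map_C, MvPolynomial.eval_X]

noncomputable def εg (n : ℕ) (i : Fin n) : MvPolynomial (Fin n) ℂ :=
  (-1 : MvPolynomial (Fin n) ℂ)^((i:ℕ)+1) * MvPolynomial.C ((n+1:ℂ))⁻¹ *
    (derivative (Fgen n)).coeff (n - ((i:ℕ)+1))

lemma eval_εg (n : ℕ) (a : Fin n → ℂ) (i : Fin n) :
    MvPolynomial.eval a (εg n i) = (derivative (fA n a)).roots.esymm ((i:ℕ)+1) := by
  set k : ℕ := (i:ℕ)+1 with hk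
  have hkn : k ≤ n := i.2
  have h := Polynomial.coeff_eq_esymm_roots_of_splits
    (IsAlgClosed.splits (derivative (fA n a))) (k := n - k)
    (by rw [natDegree_deriv]; omega)
  rw [natDegree_deriv] at h
  have h2 : n - (n - k) = k := by omega
  rw [h2] at h
  have hl : (derivative (fA n a)).leadingCoeff = (n+1:ℂ) := by
    rw [leadingCoeff, natDegree_deriv, coeff_n_deriv]
  rw [hl] at h
  have hcoeff : MvPolynomial.eval a ((derivative (Fgen n)).coeff (n - k))
      = (derivative (fA n a)).coeff (n - k) := by
    rw [← map_Fgen n a, derivative_map, coeff_map]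
  have hne : (n+1:ℂ) ≠ 0 := Nat.cast_add_one_ne_zero n
  rw [εg, map_mul, map_mul, hcoeff, h]
  rw [map_pow, map_neg, map_one, MvPolynomial.eval_C]
  have hsq : ((-1:ℂ))^k * ((-1:ℂ))^k = 1 := by rw [← mul_pow]; norm_num
  set E := (derivative (fA n a)).roots.esymm k
  have : (-1:ℂ)^k * (n+1:ℂ)⁻¹ * ((n+1:ℂ)*(-1:ℂ)^k*E) = ((-1:ℂ)^k*(-1:ℂ)^k) * ((n+1:ℂ)⁻¹*(n+1:ℂ)) * E := by ring
  rw [this, hsq, inv_mul_cancel₀ hne, one_mul, one_mul]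

open MvPolynomial in
noncomputable def Gg (n : ℕ) (j : Fin n) :
    MvPolynomial (Fin n) (MvPolynomial (Fin n) ℂ) :=
  Polynomial.aeval (MvPolynomial.X j) (Fgen n)

lemma rename_Gg (n : ℕ) (e : Equiv.Perm (Fin n)) (j : Fin n) :
    MvPolynomial.rename e (Gg n j) = Gg n (e j) := by
  rw [Gg, Gg, ← Polynomial.aeval_algHom_apply (MvPolynomial.rename (e : Fin n → Fin n))
    (MvPolynomial.X j) (Fgen n), MvPolynomial.rename_X]

noncomputable def Ψ (n k : ℕ) : MvPolynomial (Fin n) (MvPolynomial (Fin n) ℂ) :=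
  MvPolynomial.aeval (Gg n) (MvPolynomial.esymm (Fin n) (MvPolynomial (Fin n) ℂ) k)

lemma Ψ_symm (n k : ℕ) : (Ψ n k).IsSymmetric := by
  intro e
  rw [Ψ]
  have h1 : MvPolynomial.rename (⇑e) (MvPolynomial.aeval (Gg n)
        (MvPolynomial.esymm (Fin n) (MvPolynomial (Fin n) ℂ) k))
      = MvPolynomial.aeval (fun j => MvPolynomial.rename (⇑e) (Gg n j))
        (MvPolynomial.esymm (Fin n) (MvPolynomial (Fin n) ℂ) k) :=
    MvPolynomial.comp_aeval_apply (f := Gg n) (MvPolynomial.rename (⇑e)) _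
  rw [h1]
  simp_rw [rename_Gg]
  have h2 : (fun j => Gg n (e j)) = (Gg n) ∘ (⇑e) := rfl
  rw [h2, ← MvPolynomial.aeval_rename, MvPolynomial.rename_esymm]

lemma exists_q (n k : ℕ) :
    ∃ q : MvPolynomial (Fin n) (MvPolynomial (Fin n) ℂ),
      MvPolynomial.aeval (fun i : Fin n =>
        MvPolynomial.esymm (Fin n) (MvPolynomial (Fin n) ℂ) ((i:ℕ)+1)) q = Ψ n k := by
  obtain ⟨q, hqe⟩ := MvPolynomial.esymmAlgHom_surjective
    (σ := Fin n) (R := MvPolynomial (Fin n) ℂ) (n := n) (by simp)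
    ⟨Ψ n k, Ψ_symm n k⟩
  refine ⟨q, ?_⟩
  have := congrArg Subtype.val hqe
  rwa [MvPolynomial.esymmAlgHom_apply] at this

lemma eval₂Hom_esymm {R' : Type*} [CommSemiring R'] {n : ℕ} (f : R' →+* ℂ)
    (g : Fin n → ℂ) (k : ℕ) :
    MvPolynomial.eval₂Hom f g (MvPolynomial.esymm (Fin n) R' k)
      = (Multiset.map g Finset.univ.val).esymm k := by
  rw [MvPolynomial.esymm, Finset.esymm_map_val, map_sum]
  exact Finset.sum_congr rfl fun t _ => by rw [map_prod]; simp

lemma eval₂_esymm {R' : Type*} [CommSemiring R'] {n : ℕ} (f : R' →+* ℂ)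
    (g : Fin n → ℂ) (k : ℕ) :
    MvPolynomial.eval₂ f g (MvPolynomial.esymm (Fin n) R' k)
      = (Multiset.map g Finset.univ.val).esymm k := by
  rw [← MvPolynomial.coe_eval₂Hom, eval₂Hom_esymm]

lemma comp_eval {n : ℕ} (a rt : Fin n → ℂ)
    (h : Fin n → MvPolynomial (Fin n) (MvPolynomial (Fin n) ℂ))
    (p : MvPolynomial (Fin n) (MvPolynomial (Fin n) ℂ)) :
    MvPolynomial.eval₂Hom (MvPolynomial.eval a) rt (MvPolynomial.aeval h p)
      = MvPolynomial.eval₂ (MvPolynomial.eval a)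
          (fun j => MvPolynomial.eval₂Hom (MvPolynomial.eval a) rt (h j)) p := by
  rw [MvPolynomial.aeval_def, MvPolynomial.eval₂_comp_left
    (MvPolynomial.eval₂Hom (MvPolynomial.eval a) rt) (algebraMap _ _) h p]
  congr 1
  apply MvPolynomial.ringHom_ext <;> intro x <;> simp [MvPolynomial.algebraMap_eq]

lemma eval_Gg {n : ℕ} (a rt : Fin n → ℂ) (j : Fin n) :
    MvPolynomial.eval₂Hom (MvPolynomial.eval a) rt (Gg n j)
      = Polynomial.eval (rt j) (fA n a) := by
  rw [Gg, Polynomial.aeval_def, Polynomial.hom_eval₂]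
  have h1 : (MvPolynomial.eval₂Hom (MvPolynomial.eval a) rt).comp
      (algebraMap (MvPolynomial (Fin n) ℂ) (MvPolynomial (Fin n) (MvPolynomial (Fin n) ℂ)))
      = MvPolynomial.eval a := by
    apply MvPolynomial.ringHom_ext <;> intro x <;> simp [MvPolynomial.algebraMap_eq]
  rw [h1, MvPolynomial.eval₂Hom_X', ← Polynomial.eval_map, map_Fgen]

end LL


/-- The Lyashko–Looijenga map for the versal unfolding of `A_n`,
sending `a` to the unordered multiset of critical values of `f_a` (the multiset image
under `f_a` of the root multiset of `f_a'/(n+1)`, which coincides with that of `f_a'`),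
extends to a polynomial map `ℂⁿ → ℂⁿ`: there are polynomials `Λ₁, …, Λ_n` in `n`
variables such that `∏_{c} (T - f_a(c)) = Tⁿ + Λ₁(a) T^(n-1) + ⋯ + Λ_n(a)`. -/
theorem lyashko_looijenga_polynomial_An (n : ℕ) (hn : 1 ≤ n) :
    ∃ Λ : Fin n → MvPolynomial (Fin n) ℂ,
      ∀ a : Fin n → ℂ,
        (((Polynomial.derivative (fA n a)).roots).map
            (fun c => X - C ((fA n a).eval c))).prod
          = X ^ n + ∑ i : Fin n,
              C (MvPolynomial.eval a (Λ i)) * X ^ (n - 1 - (i : ℕ)) := by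
  classical
  choose q hq using fun k => LL.exists_q n k
  refine ⟨fun i => (-1 : MvPolynomial (Fin n) ℂ)^((i:ℕ)+1) *
    MvPolynomial.eval₂ (RingHom.id _) (LL.εg n) (q ((i:ℕ)+1)), ?_⟩
  intro a
  set d := Polynomial.derivative (fA n a) with hd
  have hcard : Multiset.card d.roots = n := LL.card_roots_deriv n a
  obtain ⟨rt, hrt⟩ := LL.exists_enum d.roots hcard
  set s : Multiset ℂ := d.roots.map (fun c => Polynomial.eval c (fA n a)) with hs
  have hcards : Multiset.card s = n := by rw [hs, Multiset.card_map, hcard]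
  have hLHS : (d.roots.map (fun c => X - C ((fA n a).eval c))) = s.map (fun t => X - C t) := by
    rw [hs, Multiset.map_map]; rfl
  rw [hLHS]
  have hmonic : ((s.map fun t => X - C t).prod).Monic :=
    monic_multiset_prod_of_monic _ _ (fun t _ => monic_X_sub_C t)
  have hdeg : ((s.map fun t => X - C t).prod).natDegree = n := by
    rw [natDegree_multiset_prod_X_sub_C_eq_card, hcards]
  rw [LL.monic_expand hmonic hdeg]
  congr 1
  refine Finset.sum_congr rfl fun i _ => ?_
  have hcoeff := Multiset.prod_X_sub_C_coeff s (k := n-1-(i:ℕ)) (by rw [hcards]; omega)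
  rw [hcards] at hcoeff
  have hin : (i:ℕ) < n := i.2
  have harith : n - (n - 1 - (i:ℕ)) = (i:ℕ)+1 := by omega
  rw [harith] at hcoeff
  have heval : MvPolynomial.eval a ((-1 : MvPolynomial (Fin n) ℂ)^((i:ℕ)+1) *
      MvPolynomial.eval₂ (RingHom.id _) (LL.εg n) (q ((i:ℕ)+1)))
      = (-1:ℂ)^((i:ℕ)+1) * s.esymm ((i:ℕ)+1) := by
    rw [map_mul, map_pow, map_neg, map_one]
    congr 1
    have step1 : MvPolynomial.eval a
        (MvPolynomial.eval₂ (RingHom.id _) (LL.εg n) (q ((i:ℕ)+1)))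
        = MvPolynomial.eval₂ (MvPolynomial.eval a)
            (fun j => MvPolynomial.eval a (LL.εg n j)) (q ((i:ℕ)+1)) := by
      rw [MvPolynomial.eval₂_comp_left (MvPolynomial.eval a) (RingHom.id _) (LL.εg n)]
      congr 1
    rw [step1]
    simp_rw [LL.eval_εg]
    have step3 : MvPolynomial.eval₂ (MvPolynomial.eval a)
        (fun j : Fin n => d.roots.esymm ((j:ℕ)+1)) (q ((i:ℕ)+1))
        = MvPolynomial.eval₂Hom (MvPolynomial.eval a) rt
            (MvPolynomial.aeval (fun j : Fin n =>
              MvPolynomial.esymm (Fin n) (MvPolynomial (Fin n) ℂ) ((j:ℕ)+1))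
              (q ((i:ℕ)+1))) := by
      rw [LL.comp_eval]
      congr 1
      funext j
      rw [LL.eval₂Hom_esymm, hrt]
    rw [step3, hq ((i:ℕ)+1), LL.Ψ, LL.comp_eval, LL.eval₂_esymm]
    have hG : (fun j => MvPolynomial.eval₂Hom (MvPolynomial.eval a) rt (LL.Gg n j))
        = fun j => Polynomial.eval (rt j) (fA n a) := funext (LL.eval_Gg a rt)
    rw [hG]
    congr 1
    have : (fun j : Fin n => Polynomial.eval (rt j) (fA n a))
        = (fun c => Polynomial.eval c (fA n a)) ∘ rt := rfl
    rw [this, ← Multiset.map_map, hrt]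
  rw [hcoeff, heval]
end

section
/- Fix integers k, ℓ ≥ 1, and let L(x) = Σ_{j=−ℓ}^{k} c_j x^j be any Laurent polynomial with c_k ≠ 0 and c_{−ℓ} ≠ 0. Then the number of pairs (α, p), where α ∈ ℂ∖{0} and p = (ε, a₁,…,a_{k−1}, c, b₁,…,b_{ℓ−1}) is a parameter tuple with ε ≠ 0, such that g_p(x) = L(αx) for all x ∈ ℂ∖{0}, is exactly k·ℓ. That is, each equivalence class of Laurent polynomials of bidegree (k,ℓ) under linear changes of the source coordinate has exactly kℓ representatives in the standard versal deformation of the singularity I_{k,ℓ}. -/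
open Polynomial

/-- The standard versal unfolding of the singularity `I_{k,ℓ}`: the Laurent polynomial
`g_p(x) = x^k + a₁x^(k-1) + ⋯ + a_{k-1}x + c + b_{ℓ-1}(ε/x) + ⋯ + b₁(ε/x)^(ℓ-1) + (ε/x)^ℓ`,
where `a i` (for `i : Fin (k-1)`) denotes `a_{i+1}` (multiplying `x^(k-1-i)`) and
`b j` (for `j : Fin (ℓ-1)`) denotes `b_{j+1}` (multiplying `(ε/x)^(ℓ-1-j)`). -/
noncomputable def gI (k l : ℕ) (ε : ℂ) (a : Fin (k - 1) → ℂ) (c : ℂ)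
    (b : Fin (l - 1) → ℂ) (x : ℂ) : ℂ :=
  x ^ k + (∑ i : Fin (k - 1), a i * x ^ (k - 1 - (i : ℕ))) + c
    + (∑ j : Fin (l - 1), b j * (ε / x) ^ (l - 1 - (j : ℕ))) + (ε / x) ^ l


noncomputable def Qp (k l : ℕ) (cf : Fin (k + l + 1) → ℂ) (α : ℂ) : ℂ[X] :=
  ∑ t : Fin (k + l + 1), C (cf t * α ^ ((t : ℤ) - (l : ℤ))) * X ^ (t : ℕ)

noncomputable def Pp (k l : ℕ) (ε : ℂ) (a : Fin (k - 1) → ℂ) (c : ℂ)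
    (b : Fin (l - 1) → ℂ) : ℂ[X] :=
  X ^ (k + l) + (∑ i : Fin (k - 1), C (a i) * X ^ (k + l - 1 - (i : ℕ))) + C c * X ^ l
    + (∑ j : Fin (l - 1), C (b j * ε ^ (l - 1 - (j : ℕ))) * X ^ ((j : ℕ) + 1)) + C (ε ^ l)


lemma evalP (k l : ℕ) (ε : ℂ) (a : Fin (k - 1) → ℂ) (c : ℂ) (b : Fin (l - 1) → ℂ)
    (x : ℂ) (hx : x ≠ 0) :
    (Pp k l ε a c b).eval x = x ^ l * gI k l ε a c b x := by
  have h1 : ∀ i : Fin (k - 1), x ^ l * (a i * x ^ (k - 1 - (i : ℕ)))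
      = a i * x ^ (k + l - 1 - (i : ℕ)) := by
    intro i
    have h : k + l - 1 - (i : ℕ) = l + (k - 1 - (i : ℕ)) := by have := i.2; omega
    rw [h, pow_add]; ring
  have h2 : ∀ j : Fin (l - 1), x ^ l * (b j * (ε / x) ^ (l - 1 - (j : ℕ)))
      = b j * ε ^ (l - 1 - (j : ℕ)) * x ^ ((j : ℕ) + 1) := by
    intro j
    have hj := j.2
    have hle : l - 1 - (j : ℕ) ≤ l := by omega
    have h : l - (l - 1 - (j : ℕ)) = (j : ℕ) + 1 := by omega
    rw [div_pow, ← h, pow_sub₀ x hx hle]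
    field_simp
  have h3 : x ^ l * (ε / x) ^ l = ε ^ l := by
    rw [div_pow]; field_simp
  simp only [gI, Pp, eval_add, eval_mul, eval_pow, eval_X, eval_C, eval_finset_sum,
    mul_add, Finset.mul_sum, h1, h2, h3, ← pow_add]
  ring_nf
  congr 1; exact Finset.sum_congr rfl fun j _ => by ring

lemma evalQ (k l : ℕ) (cf : Fin (k + l + 1) → ℂ) (α : ℂ) (x : ℂ) (hx : x ≠ 0) :
    (Qp k l cf α).eval x
      = x ^ l * ∑ t : Fin (k + l + 1), cf t * (α * x) ^ ((t : ℤ) - (l : ℤ)) := by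
  simp only [Qp, eval_finset_sum, eval_mul, eval_pow, eval_C, eval_X, Finset.mul_sum]
  refine Finset.sum_congr rfl fun t _ => ?_
  rw [mul_zpow]
  have h : (x : ℂ) ^ (t : ℕ) = x ^ (l : ℤ) * x ^ ((t : ℤ) - l) := by
    rw [← zpow_add₀ hx]
    rw [show (l : ℤ) + ((t : ℤ) - l) = (t : ℤ) by ring, zpow_natCast]
  rw [h, ← zpow_natCast x l]
  ring



lemma coeffQ (k l : ℕ) (cf : Fin (k + l + 1) → ℂ) (α : ℂ) (m : ℕ) (hm : m < k + l + 1) :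
    (Qp k l cf α).coeff m = cf ⟨m, hm⟩ * α ^ ((m : ℤ) - (l : ℤ)) := by
  simp only [Qp, finset_sum_coeff, coeff_C_mul, coeff_X_pow, mul_ite, mul_one, mul_zero]
  rw [Finset.sum_eq_single (⟨m, hm⟩ : Fin (k + l + 1))]
  · simp
  · intro t _ ht
    have h : ¬ (m = (t : ℕ)) := fun h => ht (Fin.ext h.symm)
    simp [h]
  · simp

lemma coeffQ_high (k l : ℕ) (cf : Fin (k + l + 1) → ℂ) (α : ℂ) (m : ℕ)
    (hm : k + l + 1 ≤ m) : (Qp k l cf α).coeff m = 0 := by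
  simp only [Qp, finset_sum_coeff, coeff_C_mul, coeff_X_pow, mul_ite, mul_one, mul_zero]
  refine Finset.sum_eq_zero fun t _ => ?_
  have := t.2
  rw [if_neg (by omega)]

noncomputable def pc (k l : ℕ) (ε : ℂ) (a : Fin (k - 1) → ℂ) (c : ℂ)
    (b : Fin (l - 1) → ℂ) (m : ℕ) : ℂ :=
  if h0 : m = 0 then ε ^ l
  else if h1 : m < l then b ⟨m - 1, by omega⟩ * ε ^ (l - m)
  else if h2 : m = l then c
  else if h3 : m < k + l then a ⟨k + l - 1 - m, by omega⟩
  else if m = k + l then 1 else 0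


lemma Pp_coeff (k l : ℕ) (hk : 1 ≤ k) (hl : 1 ≤ l) (ε : ℂ) (a : Fin (k - 1) → ℂ)
    (c : ℂ) (b : Fin (l - 1) → ℂ) (m : ℕ) :
    (Pp k l ε a c b).coeff m = pc k l ε a c b m := by
  simp only [Pp, coeff_add, coeff_X_pow, finset_sum_coeff, coeff_C_mul, coeff_C,
    mul_ite, mul_one, mul_zero]
  unfold pc
  by_cases h0 : m = 0
  · subst h0
    rw [Finset.sum_eq_zero (fun (i : Fin (k-1)) _ => if_neg (by have := i.2; omega)),
        Finset.sum_eq_zero (fun (j : Fin (l-1)) _ => if_neg (by omega)),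
        dif_pos rfl, if_neg (by omega), if_neg (by omega), if_pos rfl]
    ring
  · rw [dif_neg h0]
    by_cases h1 : m < l
    · rw [dif_pos h1,
        Finset.sum_eq_zero (fun (i : Fin (k-1)) _ => if_neg (by have := i.2; omega)),
        if_neg (by omega), if_neg (by omega), if_neg h0,
        Finset.sum_eq_single_of_mem (⟨m-1, by omega⟩ : Fin (l-1)) (Finset.mem_univ _)
          (fun j _ hj => if_neg (fun h => hj (Fin.ext (show (j:ℕ) = m-1 by omega)))),
        if_pos (show m = m - 1 + 1 by omega),
        show l - 1 - (m-1) = l - m by omega]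
      ring
    · rw [dif_neg h1]
      by_cases h2 : m = l
      · rw [dif_pos h2,
          Finset.sum_eq_zero (fun (i : Fin (k-1)) _ => if_neg (by have := i.2; omega)),
          Finset.sum_eq_zero (fun (j : Fin (l-1)) _ => if_neg (by have := j.2; omega)),
          if_neg (by omega), if_pos h2, if_neg h0]
        ring
      · rw [dif_neg h2]
        by_cases h3 : m < k + l
        · rw [dif_pos h3,
            Finset.sum_eq_zero (fun (j : Fin (l-1)) _ => if_neg (by have := j.2; omega)),
            if_neg (by omega), if_neg h2, if_neg h0,
            Finset.sum_eq_single_of_mem (⟨k+l-1-m, by omega⟩ : Fin (k-1)) (Finset.mem_univ _)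
              (fun i _ hi => if_neg (fun h => hi (Fin.ext (show (i:ℕ) = k+l-1-m by have := i.2; omega)))),
            if_pos (show m = k + l - 1 - (k+l-1-m) by omega)]
          ring
        · rw [dif_neg h3]
          by_cases h4 : m = k + l
          · rw [if_pos h4,
              Finset.sum_eq_zero (fun (i : Fin (k-1)) _ => if_neg (by have := i.2; omega)),
              Finset.sum_eq_zero (fun (j : Fin (l-1)) _ => if_neg (by have := j.2; omega)),
              if_neg h2, if_neg h0]
            ring
          · rw [if_neg h4,
              Finset.sum_eq_zero (fun (i : Fin (k-1)) _ => if_neg (by have := i.2; omega)),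
              Finset.sum_eq_zero (fun (j : Fin (l-1)) _ => if_neg (by have := j.2; omega)),
              if_neg h2, if_neg h0]
            ring

lemma key_iff (k l : ℕ) (hk : 1 ≤ k) (hl : 1 ≤ l) (cf : Fin (k + l + 1) → ℂ) (α ε : ℂ)
    (hα : α ≠ 0) (a : Fin (k - 1) → ℂ) (c : ℂ) (b : Fin (l - 1) → ℂ) :
    Pp k l ε a c b = Qp k l cf α ↔
      (cf (Fin.last (k + l)) * α ^ k = 1 ∧
       ε ^ l * α ^ l = cf 0 ∧
       (∀ i : Fin (k - 1), a i = cf ⟨k + l - 1 - (i : ℕ), by omega⟩ * α ^ (k - 1 - (i : ℕ))) ∧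
       c = cf ⟨l, by omega⟩ ∧
       (∀ j : Fin (l - 1), b j * (ε ^ (l - 1 - (j : ℕ)) * α ^ (l - 1 - (j : ℕ)))
          = cf ⟨(j : ℕ) + 1, by have := j.2; omega⟩)) := by
  rw [Polynomial.ext_iff]
  constructor
  · intro h
    refine ⟨?_, ?_, ?_, ?_, ?_⟩
    · have h1 := h (k + l)
      rw [Pp_coeff k l hk hl, coeffQ k l cf α _ (by omega)] at h1
      unfold pc at h1
      rw [dif_neg (by omega), dif_neg (by omega), dif_neg (by omega), dif_neg (by omega),
        if_pos rfl] at h1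
      rw [show ((k + l : ℕ) : ℤ) - (l : ℤ) = ((k : ℕ) : ℤ) by omega, zpow_natCast] at h1
      exact h1.symm
    · have h1 := h 0
      rw [Pp_coeff k l hk hl, coeffQ k l cf α 0 (by omega)] at h1
      unfold pc at h1
      rw [dif_pos rfl] at h1
      rw [show (⟨0, by omega⟩ : Fin (k + l + 1)) = 0 from rfl] at h1
      rw [h1, show ((0 : ℕ) : ℤ) - (l : ℤ) = -(l : ℤ) by omega, zpow_neg, zpow_natCast]
      field_simp
    · intro i
      have hi := i.2
      have h1 := h (k + l - 1 - (i : ℕ))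
      rw [Pp_coeff k l hk hl, coeffQ k l cf α _ (by omega)] at h1
      unfold pc at h1
      rw [dif_neg (by omega), dif_neg (by omega), dif_neg (by omega), dif_pos (by omega)] at h1
      rw [show (⟨k + l - 1 - (k + l - 1 - (i : ℕ)), by omega⟩ : Fin (k - 1)) = i from
        Fin.ext (show k + l - 1 - (k + l - 1 - (i : ℕ)) = (i : ℕ) by omega)] at h1
      rw [h1, show ((k + l - 1 - (i : ℕ) : ℕ) : ℤ) - (l : ℤ) = ((k - 1 - (i : ℕ) : ℕ) : ℤ)
        by omega, zpow_natCast]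
    · have h1 := h l
      rw [Pp_coeff k l hk hl, coeffQ k l cf α l (by omega)] at h1
      unfold pc at h1
      rw [dif_neg (by omega), dif_neg (by omega), dif_pos rfl] at h1
      rw [h1, show ((l : ℕ) : ℤ) - (l : ℤ) = 0 by omega, zpow_zero, mul_one]
    · intro j
      have hj := j.2
      have h1 := h ((j : ℕ) + 1)
      rw [Pp_coeff k l hk hl, coeffQ k l cf α _ (by omega)] at h1
      unfold pc at h1
      rw [dif_neg (by omega), dif_pos (by omega)] at h1
      rw [show (⟨(j : ℕ) + 1 - 1, by omega⟩ : Fin (l - 1)) = j from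
        Fin.ext (show (j : ℕ) + 1 - 1 = (j : ℕ) by omega)] at h1
      rw [show l - ((j : ℕ) + 1) = l - 1 - (j : ℕ) by omega] at h1
      rw [← mul_assoc, h1, mul_assoc, ← zpow_natCast α (l - 1 - (j : ℕ)), ← zpow_add₀ hα,
        show (((j : ℕ) + 1 : ℕ) : ℤ) - (l : ℤ) + ((l - 1 - (j : ℕ) : ℕ) : ℤ) = 0 by omega,
        zpow_zero, mul_one]
  · rintro ⟨h1, h2, h3, h4, h5⟩ m
    rw [Pp_coeff k l hk hl]
    by_cases hm : m < k + l + 1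
    · rw [coeffQ k l cf α m hm]
      unfold pc
      by_cases e0 : m = 0
      · rw [dif_pos e0]
        subst e0
        rw [show (⟨0, hm⟩ : Fin (k + l + 1)) = 0 from rfl,
          show ((0 : ℕ) : ℤ) - (l : ℤ) = -(l : ℤ) by omega, zpow_neg, zpow_natCast, ← h2]
        field_simp
      · rw [dif_neg e0]
        by_cases e1 : m < l
        · rw [dif_pos e1]
          have h5' : b ⟨m - 1, by omega⟩ * (ε ^ (l - 1 - (m - 1)) * α ^ (l - 1 - (m - 1)))
              = cf ⟨m - 1 + 1, by omega⟩ := h5 ⟨m - 1, by omega⟩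
          rw [show l - 1 - (m - 1) = l - m by omega,
            show (⟨m - 1 + 1, by omega⟩ : Fin (k + l + 1)) = ⟨m, hm⟩ from
              Fin.ext (show m - 1 + 1 = m by omega)] at h5'
          rw [show ((m : ℕ) : ℤ) - (l : ℤ) = -((l - m : ℕ) : ℤ) by omega, zpow_neg, zpow_natCast,
            ← h5']
          have hz : (α : ℂ) ^ (l - m) ≠ 0 := pow_ne_zero _ hα
          field_simp
        · rw [dif_neg e1]
          by_cases e2 : m = l
          · rw [dif_pos e2]
            subst e2
            rw [show ((m : ℕ) : ℤ) - (m : ℤ) = 0 by omega, zpow_zero, mul_one]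
            exact h4
          · rw [dif_neg e2]
            by_cases e3 : m < k + l
            · rw [dif_pos e3]
              have h3' : a ⟨k + l - 1 - m, by omega⟩
                  = cf ⟨k + l - 1 - (k + l - 1 - m), by omega⟩ * α ^ (k - 1 - (k + l - 1 - m)) :=
                h3 ⟨k + l - 1 - m, by omega⟩
              rw [show (⟨k + l - 1 - (k + l - 1 - m), by omega⟩ : Fin (k + l + 1)) = ⟨m, hm⟩ from
                  Fin.ext (show k + l - 1 - (k + l - 1 - m) = m by omega),
                show k - 1 - (k + l - 1 - m) = m - l by omega] at h3'
              rw [h3', show ((m : ℕ) : ℤ) - (l : ℤ) = ((m - l : ℕ) : ℤ) by omega, zpow_natCast]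
            · rw [dif_neg e3, if_pos (by omega)]
              rw [show (⟨m, hm⟩ : Fin (k + l + 1)) = Fin.last (k + l) from
                  Fin.ext (show m = k + l by omega),
                show ((m : ℕ) : ℤ) - (l : ℤ) = ((k : ℕ) : ℤ) by omega, zpow_natCast]
              exact h1.symm
    · rw [coeffQ_high k l cf α m (by omega)]
      unfold pc
      rw [dif_neg (by omega), dif_neg (by omega), dif_neg (by omega), dif_neg (by omega),
        if_neg (by omega)]


lemma ncard_pow_eq (n : ℕ) (hn : 1 ≤ n) (w : ℂ) (hw : w ≠ 0) :
    ∃ s : Finset ℂ, {z : ℂ | z ^ n = w} = ↑s ∧ s.card = n := by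
  have hζ : IsPrimitiveRoot (Complex.exp (2 * Real.pi * Complex.I / n)) n :=
    Complex.isPrimitiveRoot_exp n (by omega)
  set ζ := Complex.exp (2 * Real.pi * Complex.I / n)
  obtain ⟨α, hα⟩ := IsAlgClosed.exists_pow_nat_eq w (show 0 < n by omega)
  have hα0 : α ≠ 0 := by
    rintro rfl
    rw [zero_pow (by omega)] at hα
    exact hw hα.symm
  refine ⟨(Finset.range n).image (fun m => ζ ^ m * α), ?_, ?_⟩
  · ext z
    simp only [Set.mem_setOf_eq, Finset.coe_image, Set.mem_image, Finset.mem_coe,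
      Finset.mem_range]
    constructor
    · intro hz
      haveI : NeZero n := ⟨by omega⟩
      have h1 : (z / α) ^ n = 1 := by
        rw [div_pow, hα, hz, div_self hw]
      obtain ⟨m, hm, hzm⟩ := hζ.eq_pow_of_pow_eq_one h1
      exact ⟨m, hm, by rw [hzm]; field_simp⟩
    · rintro ⟨m, hm, rfl⟩
      rw [mul_pow, ← pow_mul, mul_comm m, pow_mul, hζ.pow_eq_one, one_pow, one_mul, hα]
  · rw [Finset.card_image_of_injOn, Finset.card_range]
    intro x hx y hy hxy
    exact hζ.injOn_pow_mul hα0 (by simpa using hx) (by simpa using hy) hxy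


lemma funeq_iff (k l : ℕ) (cf : Fin (k + l + 1) → ℂ) (α ε : ℂ)
    (a : Fin (k - 1) → ℂ) (c : ℂ) (b : Fin (l - 1) → ℂ) :
    (∀ x : ℂ, x ≠ 0 → gI k l ε a c b x
        = ∑ t : Fin (k + l + 1), cf t * (α * x) ^ ((t : ℤ) - (l : ℤ)))
      ↔ Pp k l ε a c b = Qp k l cf α := by
  constructor
  · intro h
    apply Polynomial.eq_of_infinite_eval_eq
    refine Set.Infinite.mono ?_ ((Set.finite_singleton (0 : ℂ)).infinite_compl)
    intro x hx
    have hx0 : x ≠ 0 := by simpa using hx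
    simp only [Set.mem_setOf_eq]
    rw [evalP k l ε a c b x hx0, evalQ k l cf α x hx0, h x hx0]
  · intro h x hx
    have h1 := congrArg (eval x) h
    rw [evalP k l ε a c b x hx, evalQ k l cf α x hx] at h1
    exact mul_left_cancel₀ (pow_ne_zero l hx) h1

/-- Each equivalence class of Laurent polynomials of bidegree
`(k,ℓ)` under linear changes `x ↦ αx` of the source coordinate has exactly `kℓ`
representatives in the standard versal deformation of the singularity `I_{k,ℓ}`: for
any Laurent polynomial `L(x) = Σ_{j=-ℓ}^{k} c_j x^j` with `c_k ≠ 0` and `c_{-ℓ} ≠ 0`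
(here `cf t` denotes `c_{t-ℓ}` for `t = 0, …, k+ℓ`), the number of pairs `(α, p)` with
`α ≠ 0`, `p = (ε, a, c, b)`, `ε ≠ 0`, and `g_p(x) = L(αx)` for all `x ≠ 0`, is exactly
`k·ℓ`. -/
theorem versal_deformation_representatives_Ikl (k l : ℕ) (hk : 1 ≤ k) (hl : 1 ≤ l)
    (cf : Fin (k + l + 1) → ℂ) (htop : cf (Fin.last (k + l)) ≠ 0) (hbot : cf 0 ≠ 0) :
    {q : ℂ × ℂ × (Fin (k - 1) → ℂ) × ℂ × (Fin (l - 1) → ℂ) |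
        q.1 ≠ 0 ∧ q.2.1 ≠ 0 ∧
        ∀ x : ℂ, x ≠ 0 →
          gI k l q.2.1 q.2.2.1 q.2.2.2.1 q.2.2.2.2 x
            = ∑ t : Fin (k + l + 1), cf t * (q.1 * x) ^ ((t : ℤ) - (l : ℤ))}.ncard
      = k * l := by
  classical
  obtain ⟨sA, hsA, hcA⟩ := ncard_pow_eq k hk (cf (Fin.last (k + l)))⁻¹ (inv_ne_zero htop)
  obtain ⟨sB, hsB, hcB⟩ := ncard_pow_eq l hl (cf 0) hbot
  set T : Set (ℂ × ℂ) :=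
    {p | p.1 ^ k = (cf (Fin.last (k + l)))⁻¹ ∧ (p.2 * p.1) ^ l = cf 0} with hTdef
  have hTne : ∀ p ∈ T, p.1 ≠ 0 ∧ p.2 ≠ 0 := by
    rintro ⟨α, ε⟩ ⟨ht1, ht2⟩
    constructor
    · intro h0
      rw [h0, zero_pow (by omega)] at ht1
      exact inv_ne_zero htop ht1.symm
    · intro h0
      rw [h0, zero_mul, zero_pow (by omega)] at ht2
      exact hbot ht2.symm
  set F : ℂ × ℂ → ℂ × ℂ × (Fin (k - 1) → ℂ) × ℂ × (Fin (l - 1) → ℂ) := fun p =>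
    (p.1, p.2, fun i => cf ⟨k + l - 1 - (i : ℕ), by omega⟩ * p.1 ^ (k - 1 - (i : ℕ)),
      cf ⟨l, by omega⟩,
      fun j => cf ⟨(j : ℕ) + 1, by have := j.2; omega⟩
        / (p.2 ^ (l - 1 - (j : ℕ)) * p.1 ^ (l - 1 - (j : ℕ)))) with hFdef
  have hS : {q : ℂ × ℂ × (Fin (k - 1) → ℂ) × ℂ × (Fin (l - 1) → ℂ) |
        q.1 ≠ 0 ∧ q.2.1 ≠ 0 ∧
        ∀ x : ℂ, x ≠ 0 →
          gI k l q.2.1 q.2.2.1 q.2.2.2.1 q.2.2.2.2 x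
            = ∑ t : Fin (k + l + 1), cf t * (q.1 * x) ^ ((t : ℤ) - (l : ℤ))} = F '' T := by
    ext ⟨α, ε, a, c, b⟩
    simp only [Set.mem_setOf_eq, Set.mem_image]
    constructor
    · rintro ⟨hα, hε, hfe⟩
      have hPQ := (funeq_iff k l cf α ε a c b).mp hfe
      obtain ⟨c1, c2, c3, c4, c5⟩ := (key_iff k l hk hl cf α ε hα a c b).mp hPQ
      refine ⟨(α, ε), ⟨?_, ?_⟩, ?_⟩
      · field_simp
        linear_combination c1
      · rw [mul_pow]
        exact c2
      · simp only [hFdef]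
        refine Prod.ext rfl (Prod.ext rfl (Prod.ext (funext fun i => (c3 i).symm)
          (Prod.ext c4.symm (funext fun j => ?_))))
        · have h5 := c5 j
          have hne : ε ^ (l - 1 - (j : ℕ)) * α ^ (l - 1 - (j : ℕ)) ≠ 0 :=
            mul_ne_zero (pow_ne_zero _ hε) (pow_ne_zero _ hα)
          field_simp
          linear_combination -h5
    · rintro ⟨⟨α', ε'⟩, hmem, hFq⟩
      obtain ⟨ht1, ht2⟩ := hmem
      obtain ⟨hα', hε'⟩ := hTne (α', ε') ⟨ht1, ht2⟩
      simp only [hFdef, Prod.mk.injEq] at hFq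
      obtain ⟨rfl, rfl, ha, hc, hb⟩ := hFq
      refine ⟨hα', hε', ?_⟩
      rw [funeq_iff k l cf α' ε' a c b, key_iff k l hk hl cf α' ε' hα' a c b]
      refine ⟨?_, ?_, ?_, ?_, ?_⟩
      · rw [ht1, mul_inv_cancel₀ htop]
      · rw [← mul_pow]
        exact ht2
      · intro i
        rw [← ha]
      · exact hc.symm
      · intro j
        rw [← hb]
        have hne : ε' ^ (l - 1 - (j : ℕ)) * α' ^ (l - 1 - (j : ℕ)) ≠ 0 :=
          mul_ne_zero (pow_ne_zero _ hε') (pow_ne_zero _ hα')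
        field_simp
  rw [hS, Set.ncard_image_of_injOn (fun p _ q _ h => ?_)]
  · have hT : T = (fun p : ℂ × ℂ => (p.1, p.2 / p.1)) '' ((↑sA : Set ℂ) ×ˢ (↑sB : Set ℂ)) := by
      ext ⟨α, ε⟩
      constructor
      · rintro ⟨ht1, ht2⟩
        have hα : α ≠ 0 := (hTne (α, ε) ⟨ht1, ht2⟩).1
        refine ⟨(α, ε * α), ⟨?_, ?_⟩, ?_⟩
        · show α ∈ (↑sA : Set ℂ)
          rw [← hsA]
          exact ht1
        · show ε * α ∈ (↑sB : Set ℂ)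
          rw [← hsB]
          exact ht2
        · simp [mul_div_cancel_right₀ _ hα]
      · rintro ⟨⟨z1, z2⟩, ⟨m1, m2⟩, heq⟩
        rw [← heq]
        have hz1 : z1 ^ k = (cf (Fin.last (k + l)))⁻¹ := by
          have hm : z1 ∈ {z : ℂ | z ^ k = (cf (Fin.last (k + l)))⁻¹} := by
            rw [hsA]; exact m1
          exact hm
        have hz10 : z1 ≠ 0 := by
          intro h0
          rw [h0, zero_pow (by omega)] at hz1
          exact inv_ne_zero htop hz1.symm
        have hz2 : z2 ^ l = cf 0 := by
          have hm : z2 ∈ {z : ℂ | z ^ l = cf 0} := by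
            rw [hsB]; exact m2
          exact hm
        exact ⟨hz1, by rw [div_mul_cancel₀ _ hz10]; exact hz2⟩
    rw [hT, Set.ncard_image_of_injOn, ← Finset.coe_product, Set.ncard_coe_finset,
      Finset.card_product, hcA, hcB]
    rintro ⟨z1, z2⟩ ⟨m1, _⟩ ⟨w1, w2⟩ ⟨n1, _⟩ hzw
    have h1 : z1 = w1 := congrArg Prod.fst hzw
    have h2 : z2 / z1 = w2 / w1 := congrArg Prod.snd hzw
    have hz10 : z1 ≠ 0 := by
      intro h0
      have hz1 : z1 ^ k = (cf (Fin.last (k + l)))⁻¹ := by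
        have hm : z1 ∈ {z : ℂ | z ^ k = (cf (Fin.last (k + l)))⁻¹} := by
          rw [hsA]; exact m1
        exact hm
      rw [h0, zero_pow (by omega)] at hz1
      exact inv_ne_zero htop hz1.symm
    subst h1
    rw [div_eq_div_iff hz10 hz10] at h2
    have : z2 = w2 := mul_right_cancel₀ hz10 h2
    rw [this]
  · simp only [hFdef, Prod.mk.injEq] at h
    exact Prod.ext h.1 h.2.1
end
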